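/- Let T be a finite tree and wt(T) its working tree (a rooted tree on the same vertex set, built by recursively choosing centroids). For any two vertices u, v of T, if a is the least common ancestor of u and v in wt(T), then a lies on the unique path between u and v in T. -/
import Mathlib

def desc {V : Type*} (p : V → V) (v : V) : Set V := {u | ∃ k, p^[k] u = v}

/-- Lift a walk whose support lies in `s` to reachability in the induced graph. -/
lemma reachable_induce_of_walk {V : Type*} {G : SimpleGraph V} {s : Set V} :
    ∀ {x y : V} (w : G.Walk x y) (hs : ∀ z ∈ w.support, z ∈ s),
    (G.induce s).Reachable ⟨x, hs x w.start_mem_support⟩ ⟨y, hs y w.end_mem_support⟩ := by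
  intro x y w
  induction w with
  | nil => intro hs; exact SimpleGraph.Reachable.refl _
  | @cons x y z h w ih =>
      intro hs
      have hy : ∀ z' ∈ w.support, z' ∈ s := fun z' hz' => hs z' (by simp [hz'])
      have hadj : (G.induce s).Adj ⟨x, hs x (SimpleGraph.Walk.start_mem_support _)⟩
          ⟨y, hy y w.start_mem_support⟩ := h
      exact hadj.reachable.trans (ih hy)

theorem stmt4 {V : Type*} [Fintype V] (T : SimpleGraph V) (hT : T.IsTree)
    (p : V → V) (r : V)
    (hroot : p r = r)
    (hreach : ∀ v, ∃ k, p^[k] v = r)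
    (hcomp : ∀ u, u ≠ r → ∃ K : (T.induce (desc p (p u) \ {p u})).ConnectedComponent,
        desc p u = Subtype.val '' K.supp)
    (hhalf : ∀ u, u ≠ r → 2 * Nat.card (desc p u) ≤ Nat.card (desc p (p u)))
    (u v a : V)
    (hua : u ∈ desc p a) (hva : v ∈ desc p a)
    (hlca : ∀ b, u ∈ desc p b → v ∈ desc p b → a ∈ desc p b) :
    ∀ (q : T.Walk u v), q.IsPath → a ∈ q.support := by
  classical
  intro q hq
  by_contra ha
  have hau : a ≠ u := fun h => ha (h ▸ q.start_mem_support)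
  have hav : a ≠ v := fun h => ha (h ▸ q.end_mem_support)
  have rfix : ∀ k, p^[k] r = r := fun k => Function.iterate_fixed hroot k
  -- no nontrivial cycles
  have noLoop : ∀ x k, p^[k] x = x → k ≠ 0 → x = r := by
    intro x k hk hk0
    obtain ⟨m, hm⟩ := hreach x
    have h1 : ∀ n, p^[k * n] x = x := by
      intro n
      induction n with
      | zero => simp
      | succ n ih =>
          rw [Nat.mul_succ, Function.iterate_add_apply, hk, ih]
    have hk1 : 1 ≤ k := Nat.one_le_iff_ne_zero.2 hk0
    have hge : m ≤ k * m := Nat.le_mul_of_pos_left m (Nat.lt_of_lt_of_le Nat.zero_lt_one hk1)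
    have h2 : p^[k * m] x = r := by
      rw [← Nat.sub_add_cancel hge, Function.iterate_add_apply, hm, rfix]
    rw [h1 m] at h2
    exact h2
  -- a cannot be a descendant of one of its proper children
  have noChild : ∀ c, p c = a → c ≠ a → a ∈ desc p c → False := by
    intro c hpc hca hm'
    obtain ⟨m, hm⟩ := hm'
    have h3 : p^[m + 1] a = a := by
      rw [Function.iterate_succ_apply', hm, hpc]
    have har : a = r := noLoop a (m + 1) h3 (Nat.succ_ne_zero m)
    have : c = r := by rw [← hm, har, rfix]
    exact hca (this.trans har.symm)
  -- extract the child of `a` above a given descendant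
  have getChild : ∀ x, x ∈ desc p a → x ≠ a →
      ∃ c, p c = a ∧ c ≠ a ∧ x ∈ desc p c := by
    intro x hx hxa
    have hex : ∃ k, p^[k] x = a := hx
    set k := Nat.find hex with hkdef
    have hk : p^[k] x = a := Nat.find_spec hex
    have hk0 : k ≠ 0 := by
      intro h
      rw [h] at hk
      exact hxa hk
    refine ⟨p^[k - 1] x, ?_, ?_, ⟨k - 1, rfl⟩⟩
    · have h2 : p^[k - 1 + 1] x = p (p^[k - 1] x) := Function.iterate_succ_apply' p (k - 1) x
      rw [← h2, Nat.sub_add_cancel (Nat.one_le_iff_ne_zero.2 hk0), hk]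
    · intro h
      exact Nat.find_min hex (Nat.sub_lt (Nat.pos_of_ne_zero hk0) Nat.one_pos) h
  obtain ⟨cu, hpcu, hcua, hucu⟩ := getChild u hua (Ne.symm hau)
  have hcur : cu ≠ r := by
    intro h
    apply hcua
    rw [h, ← hroot, ← h, hpcu]
  -- Step 1: the support of q lies in desc p a
  have hsupp : ∀ z ∈ q.support, z ∈ desc p a := by
    by_cases har : a = r
    · intro z _
      subst har
      exact hreach z
    · obtain ⟨K, hK⟩ := hcomp a har
      obtain ⟨u', hu's, hu'v⟩ := hK ▸ hua
      obtain ⟨v', hv's, hv'v⟩ := hK ▸ hva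
      have hKu : (T.induce (desc p (p a) \ {p a})).connectedComponentMk u' = K :=
        (SimpleGraph.ConnectedComponent.mem_supp_iff _ _).1 hu's
      have hKv : (T.induce (desc p (p a) \ {p a})).connectedComponentMk v' = K :=
        (SimpleGraph.ConnectedComponent.mem_supp_iff _ _).1 hv's
      obtain ⟨w'⟩ := SimpleGraph.ConnectedComponent.exact (hKu.trans hKv.symm)
      -- map w' to a walk in T
      let f : T.induce (desc p (p a) \ {p a}) →g T :=
        ⟨Subtype.val, fun h => h⟩
      set w : T.Walk u v := ((w'.map f).copy hu'v hv'v) with hwdef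
      -- w.toPath is a path from u to v, equal to q by uniqueness
      have hqw : q = (w.toPath : T.Walk u v) :=
        ((hT.existsUnique_path u v).unique hq w.toPath.2)
      intro z hz
      rw [hqw] at hz
      have hz' : z ∈ w.support := SimpleGraph.Walk.support_toPath_subset w hz
      rw [hwdef, SimpleGraph.Walk.support_copy, SimpleGraph.Walk.support_map] at hz'
      obtain ⟨z', hz's, hz'v⟩ := List.mem_map.1 hz'
      -- z' is in the same component as u'
      have hzc : (T.induce (desc p (p a) \ {p a})).connectedComponentMk z' = K := by
        rw [← hKu]
        exact SimpleGraph.ConnectedComponent.sound ⟨(w'.takeUntil z' hz's).reverse⟩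
      have hzs : z' ∈ K.supp := (SimpleGraph.ConnectedComponent.mem_supp_iff _ _).2 hzc
      rw [← hz'v]
      exact hK ▸ ⟨z', hzs, rfl⟩
  -- Step 2: support avoids a, so q lives in desc p (p cu) \ {p cu}
  have hsupp' : ∀ z ∈ q.support, z ∈ desc p (p cu) \ {p cu} := by
    intro z hz
    constructor
    · rw [hpcu]; exact hsupp z hz
    · intro h
      rw [Set.mem_singleton_iff, hpcu] at h
      exact ha (h ▸ hz)
  have hreach' := reachable_induce_of_walk (s := desc p (p cu) \ {p cu}) q hsupp'
  obtain ⟨Ku, hKu⟩ := hcomp cu hcur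
  obtain ⟨u', hu's, hu'v⟩ := hKu ▸ hucu
  have huu' : u' = (⟨u, hsupp' u q.start_mem_support⟩ : {x // x ∈ desc p (p cu) \ {p cu}}) :=
    Subtype.ext hu'v
  have hvK : (⟨v, hsupp' v q.end_mem_support⟩ : {x // x ∈ desc p (p cu) \ {p cu}}) ∈ Ku.supp := by
    rw [SimpleGraph.ConnectedComponent.mem_supp_iff]
    have h1 : (T.induce (desc p (p cu) \ {p cu})).connectedComponentMk
        ⟨v, hsupp' v q.end_mem_support⟩ =
        (T.induce (desc p (p cu) \ {p cu})).connectedComponentMk u' := by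
      rw [huu']
      exact SimpleGraph.ConnectedComponent.sound hreach'.symm
    rw [h1]
    exact (SimpleGraph.ConnectedComponent.mem_supp_iff _ _).1 hu's
  have hvcu : v ∈ desc p cu := by
    rw [hKu]
    exact ⟨_, hvK, rfl⟩
  exact noChild cu hpcu hcua (hlca cu hucu hvcu)
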